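/- Every triangle-free graph G with m edges satisfies ρ(G) ≤ √m, where ρ(G) is the largest eigenvalue of the adjacency matrix of G. -/

import Mathlib

open scoped Classical
open SimpleGraph Matrix

def ContainsCopy {α β : Type*} (H : SimpleGraph α) (G : SimpleGraph β) : Prop :=
  ∃ f : α ↪ β, ∀ a b, H.Adj a b → G.Adj (f a) (f b)

def gem : SimpleGraph (Fin 5) :=
  SimpleGraph.fromRel (fun a b => (b.val = a.val + 1 ∧ b.val ≤ 3) ∨ b = 4)

def bookS (k : ℕ) : SimpleGraph (Fin 2 ⊕ Fin k) :=
  SimpleGraph.fromRel (fun a _ => a.isLeft = true)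

def pendantS (s t : ℕ) : SimpleGraph (Fin 2 ⊕ (Fin s ⊕ Fin t)) :=
  SimpleGraph.fromRel (fun a b =>
    match a, b with
    | Sum.inl _, Sum.inl _ => True
    | Sum.inl _, Sum.inr (Sum.inl _) => True
    | Sum.inl i, Sum.inr (Sum.inr _) => i = 0
    | _, _ => False)

def starG (r : ℕ) : SimpleGraph (Fin (r + 1)) :=
  SimpleGraph.fromRel (fun a _ => a = 0)

noncomputable def specRad {V : Type*} [Fintype V] (G : SimpleGraph V) : ℝ :=
  sSup {μ : ℝ | Module.End.HasEigenvalue (Matrix.mulVecLin (G.adjMatrix ℝ)) μ}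

noncomputable def edgeCount {V : Type*} [Fintype V] (G : SimpleGraph V) : ℕ :=
  G.edgeFinset.card

noncomputable def edgesIn {V : Type*} [Fintype V] (G : SimpleGraph V) (S : Finset V) : ℕ :=
  (G.edgeFinset.filter (fun e => ∀ v ∈ e, v ∈ S)).card

noncomputable def N0 {V : Type*} [Fintype V] (G : SimpleGraph V) (u : V) : Finset V :=
  (G.neighborFinset u).filter (fun v => ∀ w ∈ G.neighborFinset u, ¬ G.Adj v w)

noncomputable def Nplus {V : Type*} [Fintype V] (G : SimpleGraph V) (u : V) : Finset V :=
  G.neighborFinset u \ N0 G u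

noncomputable def Wset {V : Type*} [Fintype V] (G : SimpleGraph V) (u : V) : Finset V :=
  Finset.univ \ insert u (G.neighborFinset u)

def InFamily (m : ℕ) {V : Type*} [Fintype V] (G : SimpleGraph V) : Prop :=
  ¬ ContainsCopy gem G ∧ edgeCount G = m ∧ (∀ v : V, ∃ w, G.Adj v w) ∧
    ¬ Nonempty (G ≃g bookS ((m - 1) / 2))

def MaxInFamily (m : ℕ) {V : Type*} [Fintype V] (G : SimpleGraph V) : Prop :=
  InFamily m G ∧ ∀ (n : ℕ) (H : SimpleGraph (Fin n)), InFamily m H → specRad H ≤ specRad G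

def IsCutVertex {V : Type*} (G : SimpleGraph V) (v : V) : Prop :=
  ∃ a b : {x : V // x ≠ v}, G.Reachable a.1 b.1 ∧
    ¬ (G.induce {x : V | x ≠ v}).Reachable a b

theorem stmt0 {V : Type*} [Fintype V] (G : SimpleGraph V) (m : ℕ)
    (hm : edgeCount G = m) (htf : G.CliqueFree 3) :
    specRad G ≤ Real.sqrt m := by
  rw [specRad]
  apply Real.sSup_le _ (Real.sqrt_nonneg _)
  intro μ hμ
  obtain ⟨x, hx⟩ := hμ.exists_hasEigenvector
  have hx0 : x ≠ 0 := hx.right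
  have hAx : (G.adjMatrix ℝ).mulVec x = μ • x := by
    have := hx.apply_eq_smul
    simpa [Matrix.mulVecLin_apply] using this
  -- key pointwise inequality
  have key : ∀ u : V, |μ| * |x u| ≤ ∑ v ∈ G.neighborFinset u, |x v| := by
    intro u
    calc |μ| * |x u| = |μ * x u| := (abs_mul _ _).symm
      _ = |((G.adjMatrix ℝ).mulVec x) u| := by
          rw [hAx]; simp [Pi.smul_apply, smul_eq_mul]
      _ = |∑ v ∈ G.neighborFinset u, x v| := by
          rw [SimpleGraph.adjMatrix_mulVec_apply]
      _ ≤ ∑ v ∈ G.neighborFinset u, |x v| := Finset.abs_sum_le_sum_abs _ _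
  -- pick a vertex maximizing |x|
  obtain ⟨v0, hv0⟩ := Function.ne_iff.mp hx0
  have hne : (Finset.univ : Finset V).Nonempty := ⟨v0, Finset.mem_univ _⟩
  obtain ⟨u, -, hu⟩ := Finset.exists_max_image Finset.univ (fun v => |x v|) hne
  have hupos : 0 < |x u| := by
    have : 0 < |x v0| := abs_pos.mpr (by simpa using hv0)
    exact lt_of_lt_of_le this (hu v0 (Finset.mem_univ _))
  -- the degree sum bound
  have hdeg : ∑ v ∈ G.neighborFinset u, (G.degree v : ℝ) ≤ (m : ℝ) := by
    have hcard : ∑ v ∈ G.neighborFinset u, G.degree v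
        = ((G.neighborFinset u).sigma (fun v => G.neighborFinset v)).card := by
      rw [Finset.card_sigma]
      rfl
    have hle : ((G.neighborFinset u).sigma (fun v => G.neighborFinset v)).card
        ≤ G.edgeFinset.card := by
      apply Finset.card_le_card_of_injOn (fun p => s(p.1, p.2))
      · intro p hp
        rw [Finset.mem_coe, Finset.mem_sigma] at hp
        simp only [Finset.mem_coe, SimpleGraph.mem_edgeFinset, SimpleGraph.mem_edgeSet]
        exact (SimpleGraph.mem_neighborFinset _ _ _).mp hp.2
      · rintro ⟨p1, p2⟩ hp ⟨q1, q2⟩ hq heq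
        rw [Finset.mem_coe, Finset.mem_sigma, SimpleGraph.mem_neighborFinset,
          SimpleGraph.mem_neighborFinset] at hp hq
        simp only [Sym2.eq_iff] at heq
        rcases heq with ⟨h1, h2⟩ | ⟨h1, h2⟩
        · subst h1; subst h2; rfl
        · exact absurd (SimpleGraph.is3Clique_triple_iff.mpr
            ⟨hp.1, h2 ▸ hq.1, hp.2⟩) (htf {u, p1, p2})
    rw [← hm, edgeCount]
    exact_mod_cast hcard ▸ Nat.cast_le.mpr hle
  -- main chain
  have main : μ ^ 2 * |x u| ≤ (m : ℝ) * |x u| := by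
    calc μ ^ 2 * |x u| = |μ| * (|μ| * |x u|) := by
          rw [← mul_assoc, ← sq, sq_abs]
      _ ≤ |μ| * ∑ v ∈ G.neighborFinset u, |x v| :=
          mul_le_mul_of_nonneg_left (key u) (abs_nonneg _)
      _ = ∑ v ∈ G.neighborFinset u, |μ| * |x v| := Finset.mul_sum _ _ _
      _ ≤ ∑ v ∈ G.neighborFinset u, ∑ w ∈ G.neighborFinset v, |x w| :=
          Finset.sum_le_sum (fun v _ => key v)
      _ ≤ ∑ v ∈ G.neighborFinset u, ∑ _w ∈ G.neighborFinset v, |x u| :=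
          Finset.sum_le_sum (fun v _ => Finset.sum_le_sum
            (fun w _ => hu w (Finset.mem_univ _)))
      _ = (∑ v ∈ G.neighborFinset u, (G.degree v : ℝ)) * |x u| := by
          rw [Finset.sum_mul]
          refine Finset.sum_congr rfl (fun v _ => ?_)
          rw [Finset.sum_const, SimpleGraph.degree, nsmul_eq_mul]
      _ ≤ (m : ℝ) * |x u| := mul_le_mul_of_nonneg_right hdeg (abs_nonneg _)
  have hsq : μ ^ 2 ≤ (m : ℝ) := le_of_mul_le_mul_right main hupos
  calc μ ≤ |μ| := le_abs_self μ
    _ = Real.sqrt (μ ^ 2) := (Real.sqrt_sq_eq_abs μ).symm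
    _ ≤ Real.sqrt m := Real.sqrt_le_sqrt hsq
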